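/- Under the hypotheses of the preceding domination result (families 𝒵_i ⊆ L^q(Ω; ℝ₊) with E(−ξζ) ≤ r_i(ξ)·E(ζ) for all ξ ∈ L^p(Ω; ℝ), ζ ∈ 𝒵_i, and 𝒵 consisting of Z = (ζ₁,…,ζ_d) with ζ_i ∈ 𝒵_i), suppose there exist u ∈ ℝ₊^d and Z ∈ 𝒵 such that the random variable h_𝐗(u ⊙ Z) is integrable (in particular a.s. finite) and u ⊙ E Z ≠ 0. Then ρ_s(𝐗) ≠ ℝ^d, i.e. the selection risk measure of 𝐗 is not the whole space. -/

import Mathlib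

open MeasureTheory Set Filter
open scoped Pointwise ENNReal RealInnerProductSpace

noncomputable section

/-- `ℝ^d` with the Euclidean norm. -/
abbrev Vec (d : ℕ) := EuclideanSpace ℝ (Fin d)

/-- Effros measurability of a set-valued map: `{ω : X(ω) ∩ G ≠ ∅}` is measurable
for every open `G`. -/
def EffrosMeasurable {Ω : Type*} [MeasurableSpace Ω] {d : ℕ} (X : Ω → Set (Vec d)) : Prop :=
  ∀ G : Set (Vec d), IsOpen G → MeasurableSet {ω | (X ω ∩ G).Nonempty}

/-- A set-valued portfolio: an Effros-measurable map with nonempty closed convex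
lower-set values. -/
structure IsPortfolio {Ω : Type*} [MeasurableSpace Ω] {d : ℕ} (X : Ω → Set (Vec d)) : Prop where
  effros : EffrosMeasurable X
  nonempty : ∀ ω, (X ω).Nonempty
  isClosed : ∀ ω, IsClosed (X ω)
  convex : ∀ ω, Convex ℝ (X ω)
  lower : ∀ ω, ∀ x ∈ X ω, ∀ y : Vec d, (∀ i, y i ≤ x i) → y ∈ X ω

/-- A coherent risk measure on `L^p(Ω; ℝ)` with values in `ℝ ∪ {+∞} ⊆ EReal`:
monotone (antitone in the gain), cash invariant, subadditive and positively homogeneous. -/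
structure IsCoherent {Ω : Type*} [MeasurableSpace Ω] (μ : Measure Ω) (p : ℝ≥0∞)
    (r : (Ω → ℝ) → EReal) : Prop where
  ne_bot : ∀ ξ : Ω → ℝ, MemLp ξ p μ → r ξ ≠ ⊥
  mono : ∀ ξ η : Ω → ℝ, MemLp ξ p μ → MemLp η p μ → (∀ᵐ ω ∂μ, ξ ω ≤ η ω) → r η ≤ r ξ
  cash : ∀ ξ : Ω → ℝ, MemLp ξ p μ → ∀ c : ℝ, r (fun ω => ξ ω + c) = r ξ - (c : EReal)
  subadd : ∀ ξ η : Ω → ℝ, MemLp ξ p μ → MemLp η p μ →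
    r (fun ω => ξ ω + η ω) ≤ r ξ + r η
  homog : ∀ ξ : Ω → ℝ, MemLp ξ p μ → ∀ c : ℝ, 0 < c →
    r (fun ω => c * ξ ω) = (c : EReal) * r ξ

/-- The selection risk measure `ρ_{s,0}(𝐗)`: the set of deterministic `x ∈ ℝ^d`
for which `𝐗 + x` has a selection with all individually acceptable components. -/
def rho0 {Ω : Type*} [MeasurableSpace Ω] (μ : Measure Ω) (p : ℝ≥0∞) {d : ℕ}
    (r : Fin d → (Ω → ℝ) → EReal) (X : Ω → Set (Vec d)) : Set (Vec d) :=
  {x | ∃ ξ : Ω → Vec d, MemLp ξ p μ ∧ (∀ᵐ ω ∂μ, ξ ω ∈ X ω) ∧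
        ∀ i, r i (fun ω => ξ ω i + x i) ≤ 0}

/-- The support function `h_M(u) = sup{⟨u,x⟩ : x ∈ M}`, with values in `EReal`. -/
def suppFn {d : ℕ} (M : Set (Vec d)) (u : Vec d) : EReal :=
  ⨆ x ∈ M, ((⟪u, x⟫ : ℝ) : EReal)

/-- The lower-bound risk measure `ρ_𝒵(𝐗)` of (4.2)/(4.3): the intersection over
`Z ∈ 𝒵` and `u ∈ ℝ₊^d` of the half-spaces `{x : ⟨x, u ⊙ EZ⟩ ≥ −E h_𝐗(u ⊙ Z)}`;
a constraint is vacuous when `E h_𝐗(u ⊙ Z) = +∞`, i.e. when `h_𝐗(u ⊙ Z)` fails to be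
a.s. finite with integrable (real-valued) version. -/
def rhoZ {Ω : Type*} [MeasurableSpace Ω] (μ : Measure Ω) {d : ℕ}
    (𝒵 : Set (Ω → Vec d)) (X : Ω → Set (Vec d)) : Set (Vec d) :=
  {x | ∀ Z ∈ 𝒵, ∀ u : Vec d, (∀ i, 0 ≤ u i) →
    (∀ᵐ ω ∂μ, suppFn (X ω) (WithLp.toLp 2 (fun i => u i * Z ω i) : Vec d) ≠ ⊤) →
    Integrable (fun ω => (suppFn (X ω) (WithLp.toLp 2 (fun i => u i * Z ω i) : Vec d)).toReal) μ →
    -∫ ω, (suppFn (X ω) (WithLp.toLp 2 (fun i => u i * Z ω i) : Vec d)).toReal ∂μ ≤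
      ⟪x, (WithLp.toLp 2 (fun i => u i * ∫ ω, Z ω i ∂μ) : Vec d)⟫}

/-- Corollary 4.3: under the domination hypotheses, if `h_𝐗(u ⊙ Z)` is integrable for
some `u ∈ ℝ₊^d` and `Z ∈ 𝒵` with `u ⊙ EZ ≠ 0`, then `ρ_s(𝐗)` is not the whole space. -/
theorem statement8 {Ω : Type*} [MeasurableSpace Ω] (μ : Measure Ω) [IsProbabilityMeasure μ]
    [μ.IsComplete] {d : ℕ} (p q : ℝ≥0∞) (hp : 1 ≤ p) (hpq : 1/p + 1/q = 1)
    (r : Fin d → (Ω → ℝ) → EReal) (hr : ∀ i, IsCoherent μ p (r i))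
    (𝒵i : Fin d → Set (Ω → ℝ))
    (h𝒵i : ∀ i, ∀ ζ ∈ 𝒵i i, MemLp ζ q μ ∧ (∀ᵐ ω ∂μ, 0 ≤ ζ ω) ∧
      ∀ ξ : Ω → ℝ, MemLp ξ p μ →
        ((∫ ω, -ξ ω * ζ ω ∂μ : ℝ) : EReal) ≤ r i ξ * ((∫ ω, ζ ω ∂μ : ℝ) : EReal))
    (𝒵 : Set (Ω → Vec d)) (h𝒵ne : 𝒵.Nonempty)
    (h𝒵 : ∀ Z ∈ 𝒵, MemLp Z q μ ∧ ∀ i, (fun ω => Z ω i) ∈ 𝒵i i)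
    (X : Ω → Set (Vec d)) (hX : IsPortfolio X)
    (hsel : ∃ ξ : Ω → Vec d, MemLp ξ p μ ∧ ∀ᵐ ω ∂μ, ξ ω ∈ X ω)
    (hexists : ∃ u : Vec d, (∀ i, 0 ≤ u i) ∧ ∃ Z ∈ 𝒵,
      (∀ᵐ ω ∂μ, suppFn (X ω) (WithLp.toLp 2 (fun i => u i * Z ω i) : Vec d) ≠ ⊤) ∧
      Integrable (fun ω => (suppFn (X ω) (WithLp.toLp 2 (fun i => u i * Z ω i) : Vec d)).toReal) μ ∧
      (WithLp.toLp 2 (fun i => u i * ∫ ω, Z ω i ∂μ) : Vec d) ≠ 0) :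
    closure (rho0 μ p r X) ≠ Set.univ := by
  obtain ⟨u, hu, Z, hZmem, haetop, hint, hw⟩ := hexists
  set w : Vec d := (WithLp.toLp 2 (fun i => u i * ∫ ω, Z ω i ∂μ) : Vec d) with hwdef
  set c : ℝ := ∫ ω, (suppFn (X ω) (WithLp.toLp 2 (fun i => u i * Z ω i) : Vec d)).toReal ∂μ with hcdef
  have hq1 : 1 ≤ q := by
    have h1 : 1/q ≤ 1 := le_of_le_of_eq le_add_self hpq
    rwa [one_div, ENNReal.inv_le_one] at h1
  obtain ⟨hZq, hZi⟩ := h𝒵 Z hZmem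
  -- key inclusion into a closed half-space
  have key : rho0 μ p r X ⊆ {x : Vec d | -c ≤ ⟪x, w⟫} := by
    rintro x ⟨ξ, hξ, hξX, hξr⟩
    have hξi : ∀ i, MemLp (fun ω => ξ ω i) p μ := fun i =>
      (EuclideanSpace.proj i : Vec d →L[ℝ] ℝ).comp_memLp' hξ
    have hZiq : ∀ i, MemLp (fun ω => Z ω i) q μ := fun i =>
      (EuclideanSpace.proj i : Vec d →L[ℝ] ℝ).comp_memLp' hZq
    have hZint : ∀ i, Integrable (fun ω => Z ω i) μ := fun i => (hZiq i).integrable hq1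
    have hmulint : ∀ i, Integrable (fun ω => ξ ω i * Z ω i) μ := by
      intro i
      have h1 : MemLp ((fun ω => Z ω i) • (fun ω => ξ ω i)) 1 μ :=
        (hξi i).smul (hZiq i) (hpqr := ⟨by simpa [add_comm, one_div] using hpq⟩)
      rw [memLp_one_iff_integrable] at h1
      exact h1.congr (by filter_upwards with ω; simp [mul_comm])
    have hcoord : ∀ i : Fin d, 0 ≤ (∫ ω, ξ ω i * Z ω i ∂μ) + x i * ∫ ω, Z ω i ∂μ := by
      intro i
      obtain ⟨hζq, hζ0, hdom⟩ := h𝒵i i _ (hZi i)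
      have hξx : MemLp (fun ω => ξ ω i + x i) p μ := (hξi i).add (memLp_const _)
      have hdom' := hdom _ hξx
      have hr0 : r i (fun ω => ξ ω i + x i) ≤ 0 := hξr i
      have hrb : r i (fun ω => ξ ω i + x i) ≠ ⊥ := (hr i).ne_bot _ hξx
      have hrt : r i (fun ω => ξ ω i + x i) ≠ ⊤ := fun h => by simp [h] at hr0
      set a : ℝ := (r i (fun ω => ξ ω i + x i)).toReal with hadef
      have ha : ((a : ℝ) : EReal) = r i (fun ω => ξ ω i + x i) := EReal.coe_toReal hrt hrb
      have ha0 : a ≤ 0 := by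
        rw [← ha] at hr0; exact_mod_cast hr0
      have hb0 : 0 ≤ ∫ ω, Z ω i ∂μ := integral_nonneg_of_ae hζ0
      rw [← ha] at hdom'
      rw [← EReal.coe_mul] at hdom'
      have h2 : (∫ ω, -(ξ ω i + x i) * Z ω i ∂μ) ≤ a * ∫ ω, Z ω i ∂μ := EReal.coe_le_coe_iff.mp hdom'
      have h3 : a * ∫ ω, Z ω i ∂μ ≤ 0 := mul_nonpos_iff.2 (Or.inr ⟨ha0, hb0⟩)
      have h4 : (∫ ω, -(ξ ω i + x i) * Z ω i ∂μ)
          = -(∫ ω, ξ ω i * Z ω i ∂μ) - x i * ∫ ω, Z ω i ∂μ := by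
        have heq : (fun ω => -(ξ ω i + x i) * Z ω i)
            = fun ω => -(ξ ω i * Z ω i) - x i * Z ω i := by funext ω; ring
        have hA : Integrable (fun ω => -(ξ ω i * Z ω i)) μ := (hmulint i).neg
        have hB : Integrable (fun ω => x i * Z ω i) μ := (hZint i).const_mul (x i)
        rw [heq, integral_sub hA hB, integral_neg, integral_const_mul]
      rw [h4] at h2
      linarith
    -- sum over coordinates
    have hinner : ⟪x, w⟫ = ∑ i, x i * (u i * ∫ ω, Z ω i ∂μ) := by
      simp [hwdef, PiLp.inner_apply, RCLike.inner_apply]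
      exact Finset.sum_congr rfl fun i _ => mul_comm _ _
    have hsumint : ∀ i, Integrable (fun ω => u i * (ξ ω i * Z ω i)) μ := fun i =>
      (hmulint i).const_mul (u i)
    have hswap : ∑ i, u i * ∫ ω, ξ ω i * Z ω i ∂μ
        = ∫ ω, ∑ i, u i * (ξ ω i * Z ω i) ∂μ := by
      rw [integral_finset_sum _ (fun i _ => hsumint i)]
      simp_rw [integral_const_mul]
    have hbound : ∫ ω, ∑ i, u i * (ξ ω i * Z ω i) ∂μ ≤ c := by
      apply integral_mono_ae (integrable_finset_sum _ (fun i _ => hsumint i)) hint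
      filter_upwards [hξX, haetop] with ω hmem htop
      have h5 : ((∑ i, u i * (ξ ω i * Z ω i) : ℝ) : EReal)
          ≤ suppFn (X ω) (WithLp.toLp 2 (fun i => u i * Z ω i) : Vec d) := by
        have he : @inner ℝ (Vec d) _ (WithLp.toLp 2 (fun i => u i * Z ω i) : Vec d) (ξ ω)
            = ∑ i, u i * (ξ ω i * Z ω i) := by
          rw [PiLp.inner_apply]
          exact Finset.sum_congr rfl fun i _ => by
            simp [RCLike.inner_apply]; ring
        rw [← he]
        unfold suppFn
        exact le_biSup (fun y => ((@inner ℝ (Vec d) _ (WithLp.toLp 2 (fun i => u i * Z ω i) : Vec d) y : ℝ) : EReal)) hmem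
      have h6 := h5.trans (EReal.le_coe_toReal htop)
      exact_mod_cast h6
    have hnn : 0 ≤ ∑ i, u i * ((∫ ω, ξ ω i * Z ω i ∂μ) + x i * ∫ ω, Z ω i ∂μ) :=
      Finset.sum_nonneg fun i _ => mul_nonneg (hu i) (hcoord i)
    have hsplit : ∑ i, u i * ((∫ ω, ξ ω i * Z ω i ∂μ) + x i * ∫ ω, Z ω i ∂μ)
        = (∑ i, u i * ∫ ω, ξ ω i * Z ω i ∂μ) + ∑ i, x i * (u i * ∫ ω, Z ω i ∂μ) := by
      rw [← Finset.sum_add_distrib]; congr 1; funext i; ring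
    rw [hsplit, hswap] at hnn
    have : -c ≤ ⟪x, w⟫ := by rw [hinner]; linarith
    exact this
  -- conclude
  intro hcl
  have hclosed : IsClosed {x : Vec d | -c ≤ ⟪x, w⟫} :=
    isClosed_le continuous_const (Continuous.inner continuous_id continuous_const)
  have hsub := closure_minimal key hclosed
  have hwn : (0:ℝ) < ‖w‖^2 := by
    have h8 : (0:ℝ) < ‖w‖ := norm_pos_iff.mpr hw
    positivity
  set t : ℝ := (-c - 1)/‖w‖^2 with htdef
  have hx0 : (t • w : Vec d) ∈ closure (rho0 μ p r X) := by rw [hcl]; trivial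
  have h7 : -c ≤ ⟪(t • w : Vec d), w⟫ := hsub hx0
  rw [real_inner_smul_left, real_inner_self_eq_norm_sq, htdef,
    div_mul_cancel₀ _ (ne_of_gt hwn)] at h7
  linarith
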